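/- Combining the previous two results: if w̃ globally minimizes θ·L_K + (1−θ)·L_A where L_K(w) = D_KL(f_w ‖ u) for the uniform distribution u on K classes, L_A ≥ 0, and there exists w_U with L_K(w_U)=0 and L_A(w_U)=R·ln K, then ‖f_{w̃} − u‖_∞ ≤ √(2·((1−θ)/θ)·R·ln K). -/

import Mathlib

lemma exp_quad {z : ℝ} (hz : 0 ≤ z) : 1 + z + z ^ 2 / 2 ≤ Real.exp z := by
  have h := Real.sum_le_exp_of_nonneg hz 3
  simp [Finset.sum_range_succ, Nat.factorial] at h
  nlinarith [h]

lemma log_le_aux {s : ℝ} (hs : 1 ≤ s) : Real.log s ≤ (s ^ 2 - 1) / (2 * s) := by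
  have hs0 : 0 < s := by linarith
  have hz : 0 ≤ (s ^ 2 - 1) / (2 * s) := by
    apply div_nonneg; nlinarith; positivity
  rw [Real.log_le_iff_le_exp hs0]
  have h := exp_quad hz
  have key : s ≤ 1 + (s ^ 2 - 1) / (2 * s) + ((s ^ 2 - 1) / (2 * s)) ^ 2 / 2 := by
    rw [← sub_nonneg]
    have hne : (2 * s) ≠ 0 := by positivity
    have : 1 + (s ^ 2 - 1) / (2 * s) + ((s ^ 2 - 1) / (2 * s)) ^ 2 / 2 - s
        = (s - 1) ^ 4 / (8 * s ^ 2) := by field_simp; ring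
    rw [this]; positivity
  linarith

lemma phi_nonneg {x y : ℝ} (hx : 0 ≤ x) (hy : 0 < y) :
    0 ≤ x * Real.log (x / y) - x + y := by
  rcases eq_or_lt_of_le hx with h0 | h0
  · simp [← h0]; linarith
  · have h1 : Real.log (y / x) ≤ y / x - 1 := Real.log_le_sub_one_of_pos (by positivity)
    have h2 : Real.log (x / y) = - Real.log (y / x) := by
      rw [← Real.log_inv]; congr 1; field_simp
    rw [h2]
    have h3 : x * Real.log (y / x) ≤ x * (y / x - 1) :=
      mul_le_mul_of_nonneg_left h1 hx
    have h4 : x * (y / x - 1) = y - x := by field_simp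
    nlinarith

lemma phi_ge {x y : ℝ} (hx : 0 ≤ x) (hxy : x ≤ y) (hy1 : y ≤ 1) (hy0 : 0 < y) :
    (x - y) ^ 2 / 2 ≤ x * Real.log (x / y) - x + y := by
  rcases eq_or_lt_of_le hx with h0 | h0
  · simp [← h0]; nlinarith
  · have hs : 1 ≤ y / x := (one_le_div h0).2 hxy
    have h1 : Real.log (y / x) ≤ ((y / x) ^ 2 - 1) / (2 * (y / x)) := log_le_aux hs
    have h2 : Real.log (x / y) = - Real.log (y / x) := by
      rw [← Real.log_inv]; congr 1; field_simp
    have h3 : ((y / x) ^ 2 - 1) / (2 * (y / x)) = (y ^ 2 - x ^ 2) / (2 * x * y) := by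
      field_simp
    rw [h2]
    have h4 : x * Real.log (y / x) ≤ x * ((y ^ 2 - x ^ 2) / (2 * x * y)) :=
      mul_le_mul_of_nonneg_left (h3 ▸ h1) hx
    have h5 : x * ((y ^ 2 - x ^ 2) / (2 * x * y)) = (y ^ 2 - x ^ 2) / (2 * y) := by
      field_simp
    rw [h5] at h4
    have h6 : (x ^ 2 - y ^ 2) / (2 * y) - ((x - y) ^ 2 / 2 + x - y)
        = (1 - y) * (x - y) ^ 2 / (2 * y) := by field_simp; ring
    have h7 : 0 ≤ (1 - y) * (x - y) ^ 2 / (2 * y) :=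
      div_nonneg (mul_nonneg (by linarith) (sq_nonneg _)) (by linarith)
    have h8 : (x ^ 2 - y ^ 2) / (2 * y) = -((y ^ 2 - x ^ 2) / (2 * y)) := by ring
    rw [mul_neg]
    linarith

lemma logsum {ι : Type*} (S : Finset ι) (p q : ι → ℝ)
    (hp : ∀ i ∈ S, 0 ≤ p i) (hq : ∀ i ∈ S, 0 < q i)
    (hb : 0 < ∑ i ∈ S, q i) :
    (∑ i ∈ S, p i) * Real.log ((∑ i ∈ S, p i) / (∑ i ∈ S, q i))
      ≤ ∑ i ∈ S, p i * Real.log (p i / q i) := by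
  set a := ∑ i ∈ S, p i with ha_def
  set b := ∑ i ∈ S, q i with hb_def
  have ha : 0 ≤ a := Finset.sum_nonneg hp
  rcases eq_or_lt_of_le ha with h0 | h0
  · have hz : ∀ i ∈ S, p i = 0 := by
      intro i hi
      exact (Finset.sum_eq_zero_iff_of_nonneg hp).1 h0.symm i hi
    have : ∑ i ∈ S, p i * Real.log (p i / q i) = 0 :=
      Finset.sum_eq_zero fun i hi => by rw [hz i hi]; ring
    rw [this, ← h0]; simp
  · have hab : 0 < a / b := div_pos h0 hb
    have key : ∀ i ∈ S,
        p i * Real.log (a / b) + (p i - q i * (a / b)) ≤ p i * Real.log (p i / q i) := by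
      intro i hi
      by_cases hp0 : p i = 0
      · simp only [hp0, zero_mul, zero_add, zero_sub, neg_le, neg_zero]
        have := mul_nonneg (hq i hi).le hab.le
        linarith
      · have hpi : 0 < p i := lt_of_le_of_ne (hp i hi) (Ne.symm hp0)
        have hy : 0 < q i * (a / b) := mul_pos (hq i hi) hab
        have h1 := phi_nonneg (le_of_lt hpi) hy
        have hlog : Real.log (p i / (q i * (a / b)))
            = Real.log (p i / q i) - Real.log (a / b) := by
          rw [show p i / (q i * (a / b)) = (p i / q i) / (a / b) by
            field_simp]
          exact Real.log_div (ne_of_gt (div_pos hpi (hq i hi))) (ne_of_gt hab)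
        rw [hlog, mul_sub] at h1
        linarith
    have hsum := Finset.sum_le_sum key
    have e1 : ∑ i ∈ S, (p i * Real.log (a / b) + (p i - q i * (a / b)))
        = a * Real.log (a / b) + (a - b * (a / b)) := by
      rw [Finset.sum_add_distrib, Finset.sum_sub_distrib, ← Finset.sum_mul, ← Finset.sum_mul]
    have e2 : b * (a / b) = a := by field_simp
    rw [e1, e2] at hsum
    linarith


/-- If w̃ globally minimizes θ·L_K + (1−θ)·L_A, where L_K is the KL divergence of the
model output to the uniform distribution on K classes, L_A ≥ 0, and some w_U attains
L_K(w_U) = 0 with L_A(w_U) = R·ln K, then ‖f_{w̃} − u‖_∞ ≤ √(2((1−θ)/θ)R·ln K). -/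
theorem output_close_to_uniform {W : Type*} (K : ℕ) (hK : 1 < K)
    (f : W → Fin K → ℝ) (hf0 : ∀ w j, 0 ≤ f w j) (hf1 : ∀ w, ∑ j, f w j = 1)
    (LK LA : W → ℝ)
    (hLK : ∀ w, LK w = ∑ j : Fin K, f w j * Real.log (f w j / (1 / K)))
    (hLA0 : ∀ w, 0 ≤ LA w)
    (θ R : ℝ) (hθ : θ ∈ Set.Ioo (0 : ℝ) 1) (hR : 0 < R)
    (wU : W) (hU1 : LK wU = 0) (hU2 : LA wU = R * Real.log K)
    (wt : W) (hmin : ∀ w : W, θ * LK wt + (1 - θ) * LA wt ≤ θ * LK w + (1 - θ) * LA w) :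
    ∀ j : Fin K, |f wt j - 1 / K| ≤ Real.sqrt (2 * ((1 - θ) / θ) * R * Real.log K) := by
  intro j
  obtain ⟨hθ0, hθ1⟩ := hθ
  have hK1 : (1:ℝ) < (K:ℝ) := by exact_mod_cast hK
  have hK0 : (0:ℝ) < (K:ℝ) := by linarith
  have hlogK : 0 < Real.log K := Real.log_pos hK1
  have hq0 : 0 < 1 / (K:ℝ) := by positivity
  have hq1 : 1 / (K:ℝ) < 1 := by rw [div_lt_one hK0]; exact hK1
  -- Step A : bound the KL of the minimizer
  have hA : LK wt ≤ (1 - θ) / θ * (R * Real.log K) := by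
    have h := hmin wU
    rw [hU1, hU2] at h
    have h2 := hLA0 wt
    rw [div_mul_eq_mul_div, le_div_iff₀ hθ0]
    nlinarith
  -- Step B : coordinatewise Pinsker-type bound
  have hpsum : ∑ i, f wt i = 1 := hf1 wt
  have hqsum : ∑ _i : Fin K, (1 / (K:ℝ)) = 1 := by
    rw [Finset.sum_const, Finset.card_univ, Fintype.card_fin, nsmul_eq_mul]
    field_simp
  have hjmem : j ∈ (Finset.univ : Finset (Fin K)) := Finset.mem_univ j
  set S := (Finset.univ : Finset (Fin K)).erase j with hS_def
  have haS : ∑ i ∈ S, f wt i = 1 - f wt j := by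
    have h := Finset.add_sum_erase Finset.univ (fun i => f wt i) hjmem
    rw [hpsum] at h; linarith
  have hbS : ∑ i ∈ S, (1 / (K:ℝ)) = 1 - 1 / (K:ℝ) := by
    have h := Finset.add_sum_erase Finset.univ (fun _ : Fin K => (1 / (K:ℝ))) hjmem
    rw [hqsum] at h; linarith
  have hb0 : 0 < 1 - 1 / (K:ℝ) := by linarith
  have ha0 : 0 ≤ 1 - f wt j := by
    rw [← haS]; exact Finset.sum_nonneg fun i _ => hf0 wt i
  -- split LK at j
  have hsplit : LK wt = f wt j * Real.log (f wt j / (1 / K))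
      + ∑ i ∈ S, f wt i * Real.log (f wt i / (1 / K)) := by
    rw [hLK wt, ← Finset.add_sum_erase Finset.univ
      (fun i => f wt i * Real.log (f wt i / (1 / (K:ℝ)))) hjmem]
  -- group bound via log-sum
  have hgroup : (1 - f wt j) * Real.log ((1 - f wt j) / (1 - 1 / (K:ℝ)))
      ≤ ∑ i ∈ S, f wt i * Real.log (f wt i / (1 / K)) := by
    have h := logsum S (fun i => f wt i) (fun _ => (1 / (K:ℝ)))
      (fun i _ => hf0 wt i) (fun i _ => hq0) (by rw [hbS]; exact hb0)
    rw [haS, hbS] at h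
    exact h
  have hB : (f wt j - 1 / (K:ℝ)) ^ 2 / 2 ≤ LK wt := by
    have hj0 := phi_nonneg (hf0 wt j) hq0
    have hg0 := phi_nonneg ha0 hb0
    rcases le_total (f wt j) (1 / (K:ℝ)) with hle | hle
    · have hx := phi_ge (hf0 wt j) hle hq1.le hq0
      rw [hsplit]; linarith
    · have hx := phi_ge ha0 (by linarith) (by linarith) hb0
      have hring : ((1 - f wt j) - (1 - 1 / (K:ℝ))) ^ 2 = (f wt j - 1 / (K:ℝ)) ^ 2 := by
        ring
      rw [hring] at hx
      rw [hsplit]; linarith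
  have hsq : (f wt j - 1 / (K:ℝ)) ^ 2 ≤ 2 * ((1 - θ) / θ) * R * Real.log K := by
    have h : 2 * ((1 - θ) / θ) * R * Real.log K
        = 2 * ((1 - θ) / θ * (R * Real.log K)) := by ring
    rw [h]; linarith
  exact Real.abs_le_sqrt hsq
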